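/- In the group G_n, let u = g₁^{e₁}⋯g_{2n+1}^{e_{2n+1}} and v = g₁^{f₁} g₂^{e₂}⋯g_{2n+1}^{e_{2n+1}} (agreeing in all coordinates except possibly the first). If there exists an even index l−1 with e_{l−1} odd, then u and v are conjugate; indeed w = g_l^{(f₁−e₁)(−1)^{e₂+e₄+⋯+e_{l−3}}} satisfies w u w⁻¹ = v. -/

import Mathlib

/-- The defining relators of the group `Gₙ`: generators are indexed by `{1, …, 2n+1}`;
for even `j`, `g_j g₁ g_j⁻¹ = g₁⁻¹` and `g_{j+1} g_j g_{j+1}⁻¹ = g₁ g_j`;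
all other pairs of generators commute. -/
def relsG (n : ℕ) : Set (FreeGroup {i : ℕ // 1 ≤ i ∧ i ≤ 2*n+1}) :=
  { w | (∃ j : {i : ℕ // 1 ≤ i ∧ i ≤ 2*n+1}, j.1 % 2 = 0 ∧
          w = FreeGroup.of j * FreeGroup.of ⟨1, by omega⟩ * (FreeGroup.of j)⁻¹ *
              FreeGroup.of ⟨1, by omega⟩) ∨
        (∃ j j1 : {i : ℕ // 1 ≤ i ∧ i ≤ 2*n+1}, j.1 % 2 = 0 ∧ j1.1 = j.1 + 1 ∧
          w = FreeGroup.of j1 * FreeGroup.of j * (FreeGroup.of j1)⁻¹ *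
              (FreeGroup.of ⟨1, by omega⟩ * FreeGroup.of j)⁻¹) ∨
        (∃ a b : {i : ℕ // 1 ≤ i ∧ i ≤ 2*n+1},
          ¬ ((a.1 = 1 ∧ b.1 % 2 = 0) ∨ (b.1 = 1 ∧ a.1 % 2 = 0) ∨
             (b.1 % 2 = 0 ∧ a.1 = b.1 + 1) ∨ (a.1 % 2 = 0 ∧ b.1 = a.1 + 1)) ∧
          w = FreeGroup.of a * FreeGroup.of b * (FreeGroup.of a)⁻¹ * (FreeGroup.of b)⁻¹) }

/-- The polycyclic group `Gₙ` of Hirsch length `2n+1`. -/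
abbrev Gn (n : ℕ) := PresentedGroup (relsG n)

/-- The generator `g_i` of `Gₙ` (1-based index, `1 ≤ i ≤ 2n+1`). -/
def gg (n : ℕ) (i : ℕ) : Gn n :=
  if h : 1 ≤ i ∧ i ≤ 2*n+1 then PresentedGroup.of ⟨i, h⟩ else 1

/-- `(-1)^m` for an integer `m`: `1` if `m` is even, `-1` if `m` is odd. -/
def eps (m : ℤ) : ℤ := if m % 2 = 0 then 1 else -1

lemma relsG_one {n : ℕ} {r : FreeGroup {i : ℕ // 1 ≤ i ∧ i ≤ 2*n+1}}
    (h : r ∈ relsG n) : PresentedGroup.mk (relsG n) r = 1 :=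
  (QuotientGroup.eq_one_iff _).mpr (Subgroup.subset_normalClosure h)

lemma gg_of {n i : ℕ} (h : 1 ≤ i ∧ i ≤ 2*n+1) :
    gg n i = PresentedGroup.mk (relsG n) (FreeGroup.of ⟨i, h⟩) := by
  simp [gg, h, PresentedGroup.of]

lemma gg_comm (n a b : ℕ)
    (h : ¬ ((a = 1 ∧ b % 2 = 0) ∨ (b = 1 ∧ a % 2 = 0) ∨
       (b % 2 = 0 ∧ a = b + 1) ∨ (a % 2 = 0 ∧ b = a + 1))) :
    Commute (gg n a) (gg n b) := by
  by_cases ha : 1 ≤ a ∧ a ≤ 2*n+1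
  · by_cases hb : 1 ≤ b ∧ b ≤ 2*n+1
    · have hr : (FreeGroup.of (⟨a, ha⟩ : {i : ℕ // 1 ≤ i ∧ i ≤ 2*n+1}) * FreeGroup.of ⟨b, hb⟩ *
          (FreeGroup.of ⟨a, ha⟩)⁻¹ * (FreeGroup.of ⟨b, hb⟩)⁻¹) ∈ relsG n := by
        right; right; exact ⟨⟨a, ha⟩, ⟨b, hb⟩, h, rfl⟩
      have := relsG_one hr
      simp only [map_mul, map_inv] at this
      rw [gg_of ha, gg_of hb]
      have h2 := mul_eq_one_iff_eq_inv.mp this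
      unfold Commute SemiconjBy
      group at h2 ⊢
      exact mul_inv_eq_one.mp (by rw [← this]; group)
    · rw [show gg n b = 1 by simp [gg, hb]]; exact Commute.one_right _
  · rw [show gg n a = 1 by simp [gg, ha]]; exact Commute.one_left _

lemma gg_rel1 (n j : ℕ) (hj : j % 2 = 0) (h1 : 1 ≤ j) (h2 : j ≤ 2*n+1) :
    gg n j * gg n 1 * (gg n j)⁻¹ = (gg n 1)⁻¹ := by
  have hjv : 1 ≤ j ∧ j ≤ 2*n+1 := ⟨h1, h2⟩
  have h1v : 1 ≤ 1 ∧ 1 ≤ 2*n+1 := by omega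
  have hr : (FreeGroup.of (⟨j, hjv⟩ : {i : ℕ // 1 ≤ i ∧ i ≤ 2*n+1}) * FreeGroup.of ⟨1, by omega⟩ *
      (FreeGroup.of ⟨j, hjv⟩)⁻¹ * FreeGroup.of ⟨1, by omega⟩) ∈ relsG n := by
    left; exact ⟨⟨j, hjv⟩, hj, rfl⟩
  have := relsG_one hr
  simp only [map_mul, map_inv] at this
  rw [gg_of hjv, gg_of h1v]
  exact eq_inv_of_mul_eq_one_left (by rw [← this])

lemma gg_rel2 (n j : ℕ) (hj : j % 2 = 0) (h1 : 1 ≤ j) (h2 : j + 1 ≤ 2*n+1) :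
    gg n (j+1) * gg n j * (gg n (j+1))⁻¹ = gg n 1 * gg n j := by
  have hjv : 1 ≤ j ∧ j ≤ 2*n+1 := by omega
  have hj1v : 1 ≤ j+1 ∧ j+1 ≤ 2*n+1 := by omega
  have h1v : 1 ≤ 1 ∧ 1 ≤ 2*n+1 := by omega
  have hr : (FreeGroup.of (⟨j+1, hj1v⟩ : {i : ℕ // 1 ≤ i ∧ i ≤ 2*n+1}) * FreeGroup.of ⟨j, hjv⟩ *
      (FreeGroup.of ⟨j+1, hj1v⟩)⁻¹ *
      (FreeGroup.of (⟨1, by omega⟩ : {i : ℕ // 1 ≤ i ∧ i ≤ 2*n+1}) * FreeGroup.of ⟨j, hjv⟩)⁻¹) ∈ relsG n := by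
    right; left; exact ⟨⟨j, hjv⟩, ⟨j+1, hj1v⟩, hj, rfl, rfl⟩
  have := relsG_one hr
  simp only [map_mul, map_inv] at this
  rw [gg_of hjv, gg_of hj1v, gg_of h1v]
  have := mul_inv_eq_one.mp (by rw [← this])
  rw [this]

lemma eps_zero : eps 0 = 1 := rfl
lemma eps_succ (m : ℤ) : eps (m+1) = -eps m := by unfold eps; split_ifs <;> omega
lemma eps_pred (m : ℤ) : eps (m-1) = -eps m := by unfold eps; split_ifs <;> omega
lemma eps_add (a b : ℤ) : eps (a+b) = eps a * eps b := by unfold eps; split_ifs <;> omega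
lemma eps_mul_self (a : ℤ) : eps a * eps a = 1 := by unfold eps; split_ifs <;> norm_num
lemma eps_even {a : ℤ} (h : a % 2 = 0) : eps a = 1 := by unfold eps; split_ifs <;> omega

section Abstract
variable {G : Type*} [Group G]

lemma conj_inv_of (t s : G) (h : t * s * t⁻¹ = s⁻¹) : t⁻¹ * s * t = s⁻¹ := by
  have h2 : s = t⁻¹ * s⁻¹ * t := by rw [← h]; group
  calc t⁻¹ * s * t = (t⁻¹ * s⁻¹ * t)⁻¹ := by group
  _ = s⁻¹ := by rw [← h2]

lemma conj_zpow_of (t s : G) (h : t * s * t⁻¹ = s⁻¹) (j : ℤ) :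
    t * s ^ j * t⁻¹ = s ^ (-j) := by
  rw [← conj_zpow, h, inv_zpow, zpow_neg]

lemma conj_flip (t s : G) (h : t * s * t⁻¹ = s⁻¹) (m k : ℤ) :
    t ^ m * s ^ k * t ^ (-m) = s ^ (k * eps m) := by
  induction m using Int.induction_on with
  | zero => simp [eps_zero]
  | succ i ih =>
      have e0 : t ^ ((i:ℤ)+1) * s ^ k * t ^ (-((i:ℤ)+1)) =
          t * (t ^ (i:ℤ) * s ^ k * t ^ (-(i:ℤ))) * t⁻¹ := by group
      rw [e0, ih, conj_zpow_of t s h, eps_succ]; ring_nf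
  | pred i ih =>
      have e0 : t ^ (-(i:ℤ)-1) * s ^ k * t ^ (-(-(i:ℤ)-1)) =
          t⁻¹ * (t ^ (-(i:ℤ)) * s ^ k * t ^ ((i:ℤ))) * t := by group
      rw [show (-(-(i:ℤ))) = (i:ℤ) by ring] at ih
      rw [e0, ih]
      have h5 := conj_zpow_of t⁻¹ s (by rw [inv_inv]; exact conj_inv_of t s h) (k * eps (-(i:ℤ)))
      rw [inv_inv] at h5
      rw [h5, eps_pred]; ring_nf

lemma conj_tower (t u c : G) (h1 : t * u * t⁻¹ = c * u)
    (h2 : u * c * u⁻¹ = c⁻¹) (h3 : Commute t c) (m : ℤ) (hm : m % 2 = 1) (k : ℤ) :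
    t ^ k * u ^ m * t ^ (-k) = c ^ k * u ^ m := by
  have huc : u * c = c⁻¹ * u := by rw [← h2]; group
  have hsq : (c * u) * (c * u) = u * u := by
    calc (c*u)*(c*u) = c * (u * c) * u := by group
    _ = c * (c⁻¹ * u) * u := by rw [huc]
    _ = u * u := by group
  have hcum : (c * u) ^ m = c * u ^ m := by
    obtain ⟨q, hq⟩ : ∃ q, m = 2*q + 1 := ⟨m / 2, by omega⟩
    have e1 : (c*u) ^ m = ((c*u)^(2:ℤ))^q * (c*u) := by
      rw [hq, zpow_add, zpow_one, zpow_mul]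
    have e2 : ((c*u):G)^(2:ℤ) = u^(2:ℤ) := by
      rw [show ((2:ℤ)) = ((2:ℕ):ℤ) from rfl, zpow_natCast, zpow_natCast, pow_two, pow_two, hsq]
    have e3 : u^((2:ℤ)*q) * c = c * u^((2:ℤ)*q) := by
      have h5 := conj_flip u c h2 (2*q) 1
      rw [eps_even (by omega), mul_one, zpow_one, zpow_neg, mul_inv_eq_iff_eq_mul] at h5
      exact h5
    rw [e1, e2, ← zpow_mul, hq]
    calc u ^ ((2:ℤ)*q) * (c * u) = (u^((2:ℤ)*q) * c) * u := by group
    _ = c * u^((2:ℤ)*q) * u := by rw [e3]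
    _ = c * u ^ ((2:ℤ)*q+1) := by rw [zpow_add, zpow_one]; group
  have htm : t * u ^ m * t⁻¹ = c * u ^ m := by rw [← conj_zpow, h1, hcum]
  have htm' : t⁻¹ * u ^ m * t = c⁻¹ * u ^ m := by
    have e4 : c⁻¹ * (t * u ^ m * t⁻¹) = u ^ m := by rw [htm]; group
    calc t⁻¹ * u ^ m * t = t⁻¹ * (c⁻¹ * (t * u ^ m * t⁻¹)) * t := by rw [e4]
    _ = (t⁻¹ * c⁻¹) * (t * u ^ m) := by group
    _ = (c⁻¹ * t⁻¹) * (t * u ^ m) := by rw [h3.inv_left.inv_right.eq]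
    _ = c⁻¹ * u ^ m := by group
  induction k using Int.induction_on with
  | zero => simp
  | succ i ih =>
      have e0 : t ^ ((i:ℤ)+1) * u ^ m * t ^ (-((i:ℤ)+1)) =
          t * (t ^ (i:ℤ) * u ^ m * t ^ (-(i:ℤ))) * t⁻¹ := by group
      rw [e0, ih]
      calc t * (c ^ (i:ℤ) * u ^ m) * t⁻¹ = (t * c ^ (i:ℤ)) * u ^ m * t⁻¹ := by group
      _ = (c ^ (i:ℤ) * t) * u ^ m * t⁻¹ := by rw [(h3.zpow_right (i:ℤ)).eq]
      _ = c ^ (i:ℤ) * (t * u ^ m * t⁻¹) := by group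
      _ = c ^ ((i:ℤ)+1) * u ^ m := by rw [htm]; group
  | pred i ih =>
      have e0 : t ^ (-(i:ℤ)-1) * u ^ m * t ^ (-(-(i:ℤ)-1)) =
          t⁻¹ * (t ^ (-(i:ℤ)) * u ^ m * t ^ ((i:ℤ))) * t := by group
      rw [show (-(-(i:ℤ))) = (i:ℤ) by ring] at ih
      rw [e0, ih]
      calc t⁻¹ * (c ^ (-(i:ℤ)) * u ^ m) * t = (t⁻¹ * c ^ (-(i:ℤ))) * u ^ m * t := by group
      _ = (c ^ (-(i:ℤ)) * t⁻¹) * u ^ m * t := by rw [(h3.zpow_right (-(i:ℤ))).inv_left.eq]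
      _ = c ^ (-(i:ℤ)) * (t⁻¹ * u ^ m * t) := by group
      _ = c ^ (-(i:ℤ)-1) * u ^ m := by rw [htm']; group
end Abstract
section Helpers
variable {G : Type*} [Group G]

lemma prod_range_split (f : ℕ → G) (a b : ℕ) :
    ((List.range (a + (1+b))).map f).prod
    = ((List.range a).map f).prod * f a *
      ((List.range b).map (fun i => f (a + (1+i)))).prod := by
  rw [List.range_add, List.map_append, List.prod_append, List.range_add, List.map_map,
    List.map_append, List.prod_append, List.map_map]
  simp [List.range_succ, Function.comp_def, mul_assoc]

lemma prod_range_split0 (f : ℕ → G) (b : ℕ) :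
    ((List.range (1+b)).map f).prod
    = f 0 * ((List.range b).map (fun i => f (1+i))).prod := by
  rw [List.range_add, List.map_append, List.prod_append, List.map_map]
  simp [List.range_succ, Function.comp_def]

end Helpers
lemma gg_flip (n j : ℕ) (hj : j % 2 = 0) (h1 : 1 ≤ j) (h2 : j ≤ 2*n+1) (a k : ℤ) :
    gg n j ^ a * gg n 1 ^ k = gg n 1 ^ (k * eps a) * gg n j ^ a := by
  have h5 := conj_flip (gg n j) (gg n 1) (gg_rel1 n j hj h1 h2) a k
  rw [zpow_neg, mul_inv_eq_iff_eq_mul] at h5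
  exact h5

lemma gg_push (n : ℕ) (e : ℕ → ℤ) : ∀ m, m + 1 ≤ 2*n+1 → ∀ k : ℤ,
    ((List.range m).map (fun i => gg n (i+2) ^ e (i+2))).prod * gg n 1 ^ k
    = gg n 1 ^ (k * eps (∑ i ∈ Finset.range ((m+1)/2), e (2*i+2))) *
      ((List.range m).map (fun i => gg n (i+2) ^ e (i+2))).prod := by
  intro m
  induction m with
  | zero => intro _ k; simp [eps_zero]
  | succ m ih =>
      intro hm k
      rw [List.range_succ, List.map_append, List.prod_append]
      simp only [List.map_cons, List.map_nil, List.prod_cons, List.prod_nil, mul_one]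
      rcases Nat.mod_two_eq_zero_or_one m with hme | hmo
      · have key := gg_flip n (m+2) (by omega) (by omega) (by omega) (e (m+2)) k
        have hs : (m+1+1)/2 = (m+1)/2 + 1 := by omega
        have hexp : (k * eps (e (m+2))) * eps (∑ i ∈ Finset.range ((m+1)/2), e (2*i+2))
            = k * eps ((∑ i ∈ Finset.range ((m+1)/2), e (2*i+2)) + e (m+2)) := by
          rw [eps_add]; ring
        calc ((List.range m).map (fun i => gg n (i+2) ^ e (i+2))).prod *
              gg n (m+2) ^ e (m+2) * gg n 1 ^ k
            = ((List.range m).map (fun i => gg n (i+2) ^ e (i+2))).prod *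
              (gg n (m+2) ^ e (m+2) * gg n 1 ^ k) := by rw [mul_assoc]
          _ = ((List.range m).map (fun i => gg n (i+2) ^ e (i+2))).prod *
              gg n 1 ^ (k * eps (e (m+2))) * gg n (m+2) ^ e (m+2) := by
                rw [key, ← mul_assoc]
          _ = gg n 1 ^ ((k * eps (e (m+2))) * eps (∑ i ∈ Finset.range ((m+1)/2), e (2*i+2))) *
              ((List.range m).map (fun i => gg n (i+2) ^ e (i+2))).prod *
              gg n (m+2) ^ e (m+2) := by rw [ih (by omega)]
          _ = gg n 1 ^ (k * eps (∑ i ∈ Finset.range ((m+1+1)/2), e (2*i+2))) *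
              (((List.range m).map (fun i => gg n (i+2) ^ e (i+2))).prod *
              gg n (m+2) ^ e (m+2)) := by
                rw [hs, Finset.sum_range_succ, show 2*((m+1)/2)+2 = m+2 by omega, hexp,
                  mul_assoc]
      · have hcomm : Commute (gg n (m+2)) (gg n 1) := gg_comm n (m+2) 1 (by omega)
        have key : gg n (m+2) ^ e (m+2) * gg n 1 ^ k = gg n 1 ^ k * gg n (m+2) ^ e (m+2) :=
          (hcomm.zpow_zpow _ _).eq
        have hs : (m+1+1)/2 = (m+1)/2 := by omega
        calc ((List.range m).map (fun i => gg n (i+2) ^ e (i+2))).prod *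
              gg n (m+2) ^ e (m+2) * gg n 1 ^ k
            = ((List.range m).map (fun i => gg n (i+2) ^ e (i+2))).prod *
              (gg n (m+2) ^ e (m+2) * gg n 1 ^ k) := by rw [mul_assoc]
          _ = ((List.range m).map (fun i => gg n (i+2) ^ e (i+2))).prod *
              gg n 1 ^ k * gg n (m+2) ^ e (m+2) := by rw [key, ← mul_assoc]
          _ = gg n 1 ^ (k * eps (∑ i ∈ Finset.range ((m+1)/2), e (2*i+2))) *
              ((List.range m).map (fun i => gg n (i+2) ^ e (i+2))).prod *
              gg n (m+2) ^ e (m+2) := by rw [ih (by omega)]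
          _ = gg n 1 ^ (k * eps (∑ i ∈ Finset.range ((m+1+1)/2), e (2*i+2))) *
              (((List.range m).map (fun i => gg n (i+2) ^ e (i+2))).prod *
              gg n (m+2) ^ e (m+2)) := by rw [hs, mul_assoc]

theorem stmt14 (n : ℕ) (e : ℕ → ℤ) (f1 : ℤ) (l : ℕ)
    (hlo : l % 2 = 1) (hl1 : 3 ≤ l) (hl2 : l ≤ 2*n+1) (hodd : e (l-1) % 2 = 1) :
    (gg n l ^ ((f1 - e 1) * eps (∑ i ∈ Finset.range ((l-3)/2), e (2*i+2)))) *
      ((List.range (2*n+1)).map (fun i => gg n (i+1) ^ e (i+1))).prod *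
      (gg n l ^ ((f1 - e 1) * eps (∑ i ∈ Finset.range ((l-3)/2), e (2*i+2))))⁻¹ =
    gg n 1 ^ f1 * ((List.range (2*n)).map (fun i => gg n (i+2) ^ e (i+2))).prod := by
  obtain ⟨d, rfl⟩ : ∃ d, l = 2*d+3 := ⟨(l-3)/2, by omega⟩
  obtain ⟨b, hb⟩ : ∃ b, 2*n = 2*d+1+b := ⟨2*n-(2*d+1), by omega⟩
  rw [show (2*d+3-3)/2 = d by omega]
  rw [show 2*d+3-1 = 2*d+2 by omega] at hodd
  set S := ∑ i ∈ Finset.range d, e (2*i+2) with hS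
  set K := (f1 - e 1) * eps S with hK
  set P : Gn n := ((List.range (2*d+1)).map (fun i => gg n (i+1) ^ e (i+1))).prod with hP
  set P' : Gn n := ((List.range (2*d)).map (fun i => gg n (i+2) ^ e (i+2))).prod with hP'
  set Q : Gn n := ((List.range b).map (fun i => gg n (2*d+3+i) ^ e (2*d+3+i))).prod with hQ
  set M : Gn n := gg n (2*d+2) ^ e (2*d+2) with hM
  set t : Gn n := gg n (2*d+3) with ht
  set c : Gn n := gg n 1 with hc
  -- split of the left-hand product
  have a1 : ((List.range ((2*d+1)+(1+b))).map (fun i => gg n (i+1) ^ e (i+1))).prod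
      = ((List.range (2*d+1)).map (fun i => gg n (i+1) ^ e (i+1))).prod *
        gg n (2*d+1+1) ^ e (2*d+1+1) *
        ((List.range b).map (fun i => gg n ((2*d+1)+(1+i)+1) ^ e ((2*d+1)+(1+i)+1))).prod :=
    prod_range_split _ _ _
  rw [show (2*d+1)+(1+b) = 2*n+1 by omega] at a1
  have a2 : List.map (fun i => gg n ((2*d+1)+(1+i)+1) ^ e ((2*d+1)+(1+i)+1)) (List.range b)
      = List.map (fun i => gg n (2*d+3+i) ^ e (2*d+3+i)) (List.range b) :=
    List.map_congr_left (fun i _ => by rw [show (2*d+1)+(1+i)+1 = 2*d+3+i by omega])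
  have hsplitL : ((List.range (2*n+1)).map (fun i => gg n (i+1) ^ e (i+1))).prod
      = P * M * Q := by
    rw [a1, a2, show 2*d+1+1 = 2*d+2 by omega]
  -- split of the right-hand product
  have b1 : ((List.range ((2*d)+(1+b))).map (fun i => gg n (i+2) ^ e (i+2))).prod
      = ((List.range (2*d)).map (fun i => gg n (i+2) ^ e (i+2))).prod *
        gg n (2*d+2) ^ e (2*d+2) *
        ((List.range b).map (fun i => gg n ((2*d)+(1+i)+2) ^ e ((2*d)+(1+i)+2))).prod :=
    prod_range_split _ _ _
  rw [show (2*d)+(1+b) = 2*n by omega] at b1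
  have b2 : List.map (fun i => gg n ((2*d)+(1+i)+2) ^ e ((2*d)+(1+i)+2)) (List.range b)
      = List.map (fun i => gg n (2*d+3+i) ^ e (2*d+3+i)) (List.range b) :=
    List.map_congr_left (fun i _ => by rw [show (2*d)+(1+i)+2 = 2*d+3+i by omega])
  have hsplitR : ((List.range (2*n)).map (fun i => gg n (i+2) ^ e (i+2))).prod
      = P' * M * Q := by
    rw [b1, b2]
  -- split off the first factor of P
  have c1 : ((List.range (1+(2*d))).map (fun i => gg n (i+1) ^ e (i+1))).prod
      = gg n (0+1) ^ e (0+1) *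
        ((List.range (2*d)).map (fun i => gg n (1+i+1) ^ e (1+i+1))).prod :=
    prod_range_split0 _ _
  rw [show 1+(2*d) = 2*d+1 by omega] at c1
  have c2 : List.map (fun i => gg n (1+i+1) ^ e (1+i+1)) (List.range (2*d))
      = List.map (fun i => gg n (i+2) ^ e (i+2)) (List.range (2*d)) :=
    List.map_congr_left (fun i _ => by rw [show 1+i+1 = i+2 by omega])
  have hpre : P = c ^ e 1 * P' := by
    rw [hP, c1, c2, show (0:ℕ)+1 = 1 by omega]
  -- commutation facts
  have hcomT : ∀ j : ℕ, j ≠ 2*d+2 → Commute t (gg n j) := fun j hj =>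
    gg_comm n (2*d+3) j (by omega)
  have hcP : Commute (t ^ K) P := by
    apply Commute.list_prod_right
    intro x hx
    simp only [List.mem_map, List.mem_range] at hx
    obtain ⟨i, hi, rfl⟩ := hx
    exact (hcomT (i+1) (by omega)).zpow_zpow _ _
  have hcQ : Commute (t ^ K) Q := by
    apply Commute.list_prod_right
    intro x hx
    simp only [List.mem_map, List.mem_range] at hx
    obtain ⟨i, hi, rfl⟩ := hx
    exact (hcomT (2*d+3+i) (by omega)).zpow_zpow _ _
  -- the key relations
  have h1 : t * gg n (2*d+2) * t⁻¹ = c * gg n (2*d+2) := by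
    have h0 := gg_rel2 n (2*d+2) (by omega) (by omega) (by omega)
    rw [show 2*d+2+1 = 2*d+3 by omega] at h0
    exact h0
  have h2 : gg n (2*d+2) * c * (gg n (2*d+2))⁻¹ = c⁻¹ :=
    gg_rel1 n (2*d+2) (by omega) (by omega) (by omega)
  have h3 : Commute t c := hcomT 1 (by omega)
  have htower := conj_tower t (gg n (2*d+2)) c h1 h2 h3 (e (2*d+2)) hodd K
  rw [zpow_neg, ← hM] at htower
  have hpush := gg_push n e (2*d) (by omega) K
  rw [show (2*d+1)/2 = d by omega, ← hS, ← hP', ← hc] at hpush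
  have hf1 : e 1 + K * eps S = f1 := by rw [hK, mul_assoc, eps_mul_self]; ring
  calc t ^ K * ((List.range (2*n+1)).map (fun i => gg n (i+1) ^ e (i+1))).prod * (t ^ K)⁻¹
      = t ^ K * (P * M * Q) * (t ^ K)⁻¹ := by rw [hsplitL]
    _ = (t ^ K * P) * (M * (Q * (t ^ K)⁻¹)) := by simp only [mul_assoc]
    _ = (P * t ^ K) * (M * ((t ^ K)⁻¹ * Q)) := by rw [hcP.eq, ← hcQ.inv_left.eq]
    _ = P * (t ^ K * M * (t ^ K)⁻¹) * Q := by simp only [mul_assoc]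
    _ = P * (c ^ K * M) * Q := by rw [htower]
    _ = (c ^ e 1 * (P' * c ^ K)) * M * Q := by rw [hpre]; simp only [mul_assoc]
    _ = (c ^ e 1 * (c ^ (K * eps S) * P')) * M * Q := by rw [hpush]
    _ = c ^ (e 1 + K * eps S) * (P' * M * Q) := by rw [zpow_add]; simp only [mul_assoc]
    _ = c ^ f1 * ((List.range (2*n)).map (fun i => gg n (i+2) ^ e (i+2))).prod := by
        rw [hf1, hsplitR]
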